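/- Let H be a distribution function on [0,∞) and φ the piecewise density (with parameter b ≥ 2) as above, and set h*(s) = ∫_0^∞ φ(s − s') dH(s') and H̄*(s) = ∫_0^∞ (1 − Φ(s − s')) dH(s'). Then for any s₁ ≤ s₂, h*(s₂) − h*(s₁) ≤ e·b²·(s₂ − s₁)·H̄*(s₁). -/

import Mathlib

open Real MeasureTheory

/-- The piecewise density φ with parameter b. -/
noncomputable def phi (b : ℤ) (s : ℝ) : ℝ :=
  if s ≤ 0 then 0
  else if s ≤ 1 / b then (2 / 3) * (b : ℝ) ^ 2 * s
  else (2 / 3) * Real.exp 1 * (b : ℝ) * Real.exp (-(b : ℝ) * s)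

/-- The CDF of φ. -/
noncomputable def Phi (b : ℤ) (s : ℝ) : ℝ := ∫ s' in Set.Iic s, phi b s'

section aux

open Set

variable {b : ℤ}

lemma bposR (hb : 2 ≤ b) : (0 : ℝ) < (b : ℝ) := by
  have : (2 : ℝ) ≤ (b : ℝ) := by exact_mod_cast hb
  linarith

lemma phi_nonneg (hb : 2 ≤ b) (s : ℝ) : 0 ≤ phi b s := by
  have h := bposR hb
  unfold phi
  split_ifs with h1 h2
  · exact le_rfl
  · push_neg at h1; positivity
  · positivity

lemma phi_le (hb : 2 ≤ b) (s : ℝ) : phi b s ≤ 2 / 3 * (b : ℝ) := by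
  have h := bposR hb
  unfold phi
  split_ifs with h1 h2
  · positivity
  · push_neg at h1
    have h3 : (b : ℝ) ^ 2 * (1 / b) = b := by field_simp
    nlinarith [mul_le_mul_of_nonneg_left h2 (sq_nonneg (b : ℝ))]
  · push_neg at h1 h2
    have hbs : 1 < (b : ℝ) * s := by
      rw [div_lt_iff₀ h] at h2; linarith [h2]
    have : Real.exp 1 * Real.exp (-(b : ℝ) * s) = Real.exp (1 - (b : ℝ) * s) := by
      rw [← Real.exp_add]; ring_nf
    have hle : Real.exp 1 * Real.exp (-(b : ℝ) * s) ≤ 1 := by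
      rw [this]
      calc Real.exp (1 - (b : ℝ) * s) ≤ Real.exp 0 := Real.exp_le_exp.mpr (by linarith)
        _ = 1 := Real.exp_zero
    nlinarith [Real.exp_pos (-(b : ℝ) * s)]

lemma phi_le_mul (hb : 2 ≤ b) {s t : ℝ} (hst : s ≤ t) (ht : 0 ≤ t) :
    phi b s ≤ 2 / 3 * (b : ℝ) ^ 2 * t := by
  have h := bposR hb
  rcases le_or_gt s (1 / b) with hs | hs
  · rcases le_or_gt s 0 with hs0 | hs0
    · simp only [phi, if_pos hs0]; positivity
    · simp only [phi, if_neg (not_le.mpr hs0), if_pos hs]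
      nlinarith [sq_nonneg (b : ℝ)]
  · have h1b : 1 / (b : ℝ) < t := lt_of_lt_of_le hs hst
    have h3 : (b : ℝ) ^ 2 * (1 / b) = b := by field_simp
    have : 2 / 3 * (b : ℝ) ≤ 2 / 3 * (b : ℝ) ^ 2 * t := by
      nlinarith [mul_le_mul_of_nonneg_left h1b.le (sq_nonneg (b : ℝ))]
    calc phi b s ≤ 2 / 3 * (b : ℝ) := phi_le hb s
      _ ≤ _ := this

lemma phi_anti (hb : 2 ≤ b) {s t : ℝ} (hs : 1 / (b : ℝ) < s) (hst : s ≤ t) :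
    phi b t ≤ phi b s := by
  have h := bposR hb
  have hs0 : 0 < s := lt_trans (by positivity) hs
  have ht0 : 0 < t := lt_of_lt_of_le hs0 hst
  have hts : 1 / (b : ℝ) < t := lt_of_lt_of_le hs hst
  unfold phi
  rw [if_neg (not_le.mpr hs0), if_neg (not_le.mpr hs), if_neg (not_le.mpr ht0),
    if_neg (not_le.mpr hts)]
  have hexp : Real.exp (-(b : ℝ) * t) ≤ Real.exp (-(b : ℝ) * s) :=
    Real.exp_le_exp.mpr (by nlinarith)
  have hc : (0 : ℝ) ≤ 2 / 3 * Real.exp 1 * (b : ℝ) := by positivity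
  exact mul_le_mul_of_nonneg_left hexp hc

lemma phi_measurable (b : ℤ) : Measurable (phi b) := by
  unfold phi
  refine Measurable.ite measurableSet_Iic measurable_const ?_
  exact Measurable.ite measurableSet_Iic (by fun_prop) (by fun_prop)

lemma phi_integrable (hb : 2 ≤ b) : Integrable (phi b) := by
  have h := bposR hb
  have hm := phi_measurable b
  rw [← integrableOn_univ]
  have h1 : IntegrableOn (phi b) (Iic (0 : ℝ)) := by
    refine (integrableOn_zero (s := Iic (0:ℝ))).congr_fun ?_ measurableSet_Iic
    intro x hx
    simp [phi, Set.mem_Iic.mp hx]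
  have h2 : IntegrableOn (phi b) (Ioc (0 : ℝ) (1 / b)) := by
    refine Integrable.mono' (integrable_const (2 / 3 * (b : ℝ)))
      hm.aestronglyMeasurable.restrict (ae_of_all _ fun x => ?_)
    rw [Real.norm_eq_abs, abs_of_nonneg (phi_nonneg hb x)]
    exact phi_le hb x
  have h3 : IntegrableOn (phi b) (Ioi (1 / (b : ℝ))) := by
    refine Integrable.mono' ((exp_neg_integrableOn_Ioi (1 / (b : ℝ)) h).const_mul
      (2 / 3 * Real.exp 1 * (b : ℝ))) hm.aestronglyMeasurable.restrict ?_
    filter_upwards [ae_restrict_mem measurableSet_Ioi] with x hx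
    have hx' : 1 / (b : ℝ) < x := hx
    have hx0 : 0 < x := lt_trans (by positivity) hx'
    rw [Real.norm_eq_abs, abs_of_nonneg (phi_nonneg hb x)]
    simp only [phi, if_neg (not_le.mpr hx0), if_neg (not_le.mpr hx')]
    exact le_refl _
  have hcover : (univ : Set ℝ) ⊆ Iic 0 ∪ (Ioc 0 (1 / b) ∪ Ioi (1 / (b : ℝ))) := by
    intro x _
    rcases le_or_gt x 0 with hx | hx
    · exact Or.inl hx
    · rcases le_or_gt x (1 / b) with hx' | hx'
      · exact Or.inr (Or.inl ⟨hx, hx'⟩)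
      · exact Or.inr (Or.inr hx')
  exact ((h1.union (h2.union h3)).mono_set hcover)

lemma Phi_nonneg (hb : 2 ≤ b) (t : ℝ) : 0 ≤ Phi b t :=
  setIntegral_nonneg measurableSet_Iic fun x _ => phi_nonneg hb x

lemma Phi_mono (hb : 2 ≤ b) : Monotone (Phi b) := fun s t hst =>
  setIntegral_mono_set (phi_integrable hb).integrableOn
    (ae_of_all _ (phi_nonneg hb)) ((Iic_subset_Iic.mpr hst).eventuallyLE)

lemma Phi_nonpos (t : ℝ) (ht : t ≤ 0) : Phi b t = 0 := by
  unfold Phi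
  refine setIntegral_eq_zero_of_forall_eq_zero fun x hx => ?_
  have : x ≤ 0 := le_trans (mem_Iic.mp hx) ht
  simp [phi, this]

lemma Phi_inv_b (hb : 2 ≤ b) : Phi b (1 / (b : ℝ)) = 1 / 3 := by
  have h := bposR hb
  have hsplit : Iic (1 / (b : ℝ)) = Iic 0 ∪ Ioc 0 (1 / (b : ℝ)) := by
    rw [Iic_union_Ioc_eq_Iic (by positivity)]
  unfold Phi
  rw [hsplit, setIntegral_union (Iic_disjoint_Ioc le_rfl) measurableSet_Ioc
    (phi_integrable hb).integrableOn (phi_integrable hb).integrableOn]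
  have h0 : ∫ s' in Iic (0 : ℝ), phi b s' = 0 :=
    setIntegral_eq_zero_of_forall_eq_zero fun x hx => by simp [phi, mem_Iic.mp hx]
  have h1 : ∫ s' in Ioc (0 : ℝ) (1 / b), phi b s'
      = ∫ s' in Ioc (0 : ℝ) (1 / b), 2 / 3 * (b : ℝ) ^ 2 * s' := by
    refine setIntegral_congr_fun measurableSet_Ioc fun x hx => ?_
    simp only [phi, if_neg (not_le.mpr hx.1), if_pos hx.2]
  rw [h0, h1, zero_add, ← intervalIntegral.integral_of_le (by positivity)]
  rw [intervalIntegral.integral_const_mul, integral_id]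
  field_simp
  ring

lemma Phi_le_one (hb : 2 ≤ b) (t : ℝ) : Phi b t ≤ 1 := by
  have h := bposR hb
  rcases le_or_gt t (1 / b) with ht | ht
  · calc Phi b t ≤ Phi b (1 / b) := Phi_mono hb ht
      _ = 1 / 3 := Phi_inv_b hb
      _ ≤ 1 := by norm_num
  · have hsplit : Iic t = Iic (1 / (b : ℝ)) ∪ Ioc (1 / (b : ℝ)) t := by
      rw [Iic_union_Ioc_eq_Iic ht.le]
    have key : ∫ s' in Ioc (1 / (b : ℝ)) t, phi b s' ≤ 2 / 3 := by
      have hmono : ∫ s' in Ioc (1 / (b : ℝ)) t, phi b s'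
          ≤ ∫ s' in Ioi (1 / (b : ℝ)), phi b s' :=
        setIntegral_mono_set (phi_integrable hb).integrableOn
          (ae_of_all _ (phi_nonneg hb)) (Ioc_subset_Ioi_self.eventuallyLE)
      have hcongr : ∫ s' in Ioi (1 / (b : ℝ)), phi b s'
          = ∫ s' in Ioi (1 / (b : ℝ)), 2 / 3 * Real.exp 1 * (b : ℝ)
              * Real.exp (-(b : ℝ) * s') := by
        refine setIntegral_congr_fun measurableSet_Ioi fun x hx => ?_
        have hx' : 1 / (b : ℝ) < x := hx
        have hx0 : 0 < x := lt_trans (by positivity) hx'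
        simp only [phi, if_neg (not_le.mpr hx0), if_neg (not_le.mpr hx')]
      have hexp : ∫ s' in Ioi (1 / (b : ℝ)), Real.exp (-(b : ℝ) * s')
          = (b : ℝ)⁻¹ * Real.exp (-1) := by
        have := integral_comp_mul_left_Ioi (fun x => Real.exp (-x)) (1 / (b : ℝ)) h
        simp only [smul_eq_mul] at this
        have hb1 : (b : ℝ) * (1 / (b : ℝ)) = 1 := by field_simp
        rw [hb1] at this
        calc ∫ s' in Ioi (1 / (b : ℝ)), Real.exp (-(b : ℝ) * s')
            = ∫ s' in Ioi (1 / (b : ℝ)), (fun x => Real.exp (-x)) ((b : ℝ) * s') := by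
              simp
          _ = (b : ℝ)⁻¹ * ∫ x in Ioi (1 : ℝ), Real.exp (-x) := this
          _ = (b : ℝ)⁻¹ * Real.exp (-1) := by rw [integral_exp_neg_Ioi]
      rw [hcongr] at hmono
      rw [MeasureTheory.integral_const_mul, hexp] at hmono
      have he : Real.exp 1 * Real.exp (-1) = 1 := by
        rw [← Real.exp_add]; norm_num
      calc ∫ s' in Ioc (1 / (b : ℝ)) t, phi b s' ≤ _ := hmono
        _ = 2 / 3 := by field_simp; nlinarith [he]
    have : Phi b t = Phi b (1 / b) + ∫ s' in Ioc (1 / (b : ℝ)) t, phi b s' := by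
      unfold Phi
      rw [hsplit, setIntegral_union (Iic_disjoint_Ioc le_rfl) measurableSet_Ioc
        (phi_integrable hb).integrableOn (phi_integrable hb).integrableOn]
    rw [this, Phi_inv_b hb]
    linarith

/-- The key pointwise inequality. -/
lemma key_pointwise (hb : 2 ≤ b) {t₁ t₂ : ℝ} (h : t₁ ≤ t₂) :
    phi b t₂ - phi b t₁ ≤ Real.exp 1 * (b : ℝ) ^ 2 * (t₂ - t₁) * (1 - Phi b t₁) := by
  have hbR := bposR hb
  have he1 : (1 : ℝ) ≤ Real.exp 1 := Real.one_le_exp (by norm_num)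
  have hΔ : 0 ≤ t₂ - t₁ := by linarith
  rcases le_or_gt t₁ 0 with ht1 | ht1
  · -- t₁ ≤ 0 : phi t₁ = 0, Phi t₁ = 0
    rw [Phi_nonpos t₁ ht1]
    have hphi1 : phi b t₁ = 0 := by simp [phi, ht1]
    rw [hphi1, sub_zero, sub_zero, mul_one]
    have h2 : phi b t₂ ≤ 2 / 3 * (b : ℝ) ^ 2 * (t₂ - t₁) :=
      phi_le_mul hb (by linarith) hΔ
    nlinarith [mul_nonneg (by linarith : (0 : ℝ) ≤ Real.exp 1 - 2 / 3)
      (mul_nonneg (sq_nonneg (b : ℝ)) hΔ)]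
  · rcases le_or_gt t₁ (1 / b) with ht1' | ht1'
    · -- 0 < t₁ ≤ 1/b
      have hP : Phi b t₁ ≤ 1 / 3 := by
        calc Phi b t₁ ≤ Phi b (1 / b) := Phi_mono hb ht1'
          _ = 1 / 3 := Phi_inv_b hb
      have hphi1 : phi b t₁ = 2 / 3 * (b : ℝ) ^ 2 * t₁ := by
        simp only [phi, if_neg (not_le.mpr ht1), if_pos ht1']
      have hdiff : phi b t₂ - phi b t₁ ≤ 2 / 3 * (b : ℝ) ^ 2 * (t₂ - t₁) := by
        rcases le_or_gt t₂ (1 / b) with ht2 | ht2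
        · have hphi2 : phi b t₂ = 2 / 3 * (b : ℝ) ^ 2 * t₂ := by
            have h0 : ¬ t₂ ≤ 0 := not_le.mpr (lt_of_lt_of_le ht1 h)
            simp only [phi, if_neg h0, if_pos ht2]
          rw [hphi1, hphi2]
          exact le_of_eq (by ring)
        · have h2 : phi b t₂ ≤ 2 / 3 * (b : ℝ) := phi_le hb t₂
          have hb' : 2 / 3 * (b : ℝ) = 2 / 3 * (b : ℝ) ^ 2 * (1 / b) := by
            field_simp
          rw [hphi1]
          have h1b : 1 / (b : ℝ) ≤ t₂ := ht2.le
          nlinarith [mul_le_mul_of_nonneg_left h1b (sq_nonneg (b : ℝ))]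
      have hrhs : 2 / 3 * (Real.exp 1 * (b : ℝ) ^ 2 * (t₂ - t₁))
          ≤ Real.exp 1 * (b : ℝ) ^ 2 * (t₂ - t₁) * (1 - Phi b t₁) := by
        have hfac : 0 ≤ Real.exp 1 * (b : ℝ) ^ 2 * (t₂ - t₁) := by positivity
        nlinarith [mul_nonneg hfac (by linarith : (0 : ℝ) ≤ 1 / 3 - Phi b t₁)]
      have : 2 / 3 * (b : ℝ) ^ 2 * (t₂ - t₁)
          ≤ 2 / 3 * (Real.exp 1 * (b : ℝ) ^ 2 * (t₂ - t₁)) := by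
        nlinarith [mul_nonneg (by linarith : (0 : ℝ) ≤ Real.exp 1 - 1)
          (mul_nonneg (sq_nonneg (b : ℝ)) hΔ)]
      linarith
    · -- t₁ > 1/b : phi decreasing, RHS nonneg
      have hd : phi b t₂ ≤ phi b t₁ := phi_anti hb ht1' h
      have hP : Phi b t₁ ≤ 1 := Phi_le_one hb t₁
      have hX : 0 ≤ Real.exp 1 * (b : ℝ) ^ 2 * (t₂ - t₁) := by positivity
      have : 0 ≤ Real.exp 1 * (b : ℝ) ^ 2 * (t₂ - t₁) * (1 - Phi b t₁) :=
        mul_nonneg hX (by linarith)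
      linarith

lemma integrable_phi_shift (hb : 2 ≤ b) (μ : Measure ℝ) [IsProbabilityMeasure μ]
    (s : ℝ) : Integrable (fun s' => phi b (s - s')) μ := by
  refine Integrable.mono' (integrable_const (2 / 3 * (b : ℝ)))
    (((phi_measurable b).comp (measurable_const.sub measurable_id)).aestronglyMeasurable)
    (ae_of_all _ fun x => ?_)
  rw [Real.norm_eq_abs, abs_of_nonneg (phi_nonneg hb _)]
  exact phi_le hb _

lemma integrable_one_sub_Phi (hb : 2 ≤ b) (μ : Measure ℝ) [IsProbabilityMeasure μ]
    (s : ℝ) : Integrable (fun s' => 1 - Phi b (s - s')) μ := by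
  refine Integrable.mono' (integrable_const 1)
    ((measurable_const.sub ((Phi_mono hb).measurable.comp
      (measurable_const.sub measurable_id))).aestronglyMeasurable)
    (ae_of_all _ fun x => ?_)
  rw [Real.norm_eq_abs, abs_le]
  constructor
  · linarith [Phi_le_one hb (s - x)]
  · linarith [Phi_nonneg hb (s - x)]

end aux

theorem convolved_density_increment_bound (b : ℤ) (hb : 2 ≤ b)
    (μ : Measure ℝ) [IsProbabilityMeasure μ] (hμ : μ (Set.Iio 0) = 0) :
    ∀ s₁ s₂ : ℝ, 0 ≤ s₁ → s₁ ≤ s₂ →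
      (∫ s', phi b (s₂ - s') ∂μ) - ∫ s', phi b (s₁ - s') ∂μ
        ≤ Real.exp 1 * (b : ℝ) ^ 2 * (s₂ - s₁) *
            ∫ s', (1 - Phi b (s₁ - s')) ∂μ := by
  intro s₁ s₂ _ h12
  have hi1 := integrable_phi_shift hb μ s₁
  have hi2 := integrable_phi_shift hb μ s₂
  have hig := integrable_one_sub_Phi hb μ s₁
  rw [← integral_sub hi2 hi1, ← MeasureTheory.integral_const_mul]
  refine integral_mono (hi2.sub hi1) (hig.const_mul _) fun x => ?_
  have := key_pointwise hb (t₁ := s₁ - x) (t₂ := s₂ - x) (by linarith)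
  simpa [show s₂ - x - (s₁ - x) = s₂ - s₁ by ring, mul_assoc] using this
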